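/- Let U be a real or complex Banach space, and let (x_n)_{n∈ℕ} and (y_n)_{n∈ℕ} be sequences in U with closed linear spans X and Y, respectively. Suppose that: (i) there are bounded linear projections P, Q : U → U with range X and Y respectively; (ii) there is a continuous linear isomorphism T : X → Y (with continuous inverse) satisfying T(x_n) = y_n for all n; and (iii) the quotient Banach spaces U/X and U/Y are isomorphic as topological vector spaces. Then (x_n) and (y_n) are congruent; moreover, one can choose a bicontinuous linear automorphism J of U such that J(x) = T(x) for every x ∈ X and T(P(u)) = Q(J(u)) for every u ∈ U (in particular J(x_n) = y_n for all n). -/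

import Mathlib

/-- Let `U` be a real or complex Banach space, `x, y` sequences in `U` with
closed linear spans `X`, `Y`. Suppose `P, Q` are bounded linear projections of `U` onto `X`
and `Y` respectively, `T : X ≃ Y` is a continuous linear isomorphism with `T (x n) = y n`
for all `n`, and the quotients `U ⧸ X` and `U ⧸ Y` are isomorphic as topological vector
spaces. Then `x` and `y` are congruent; moreover one can choose a bicontinuous linear
automorphism `J` of `U` extending `T` such that `T (P u) = Q (J u)` for all `u`
(in particular `J (x n) = y n` for all `n`). -/
theorem statement0 {𝕜 : Type*} [RCLike 𝕜] {U : Type*} [NormedAddCommGroup U]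
    [NormedSpace 𝕜 U] [CompleteSpace U]
    (x y : ℕ → U) (X Y : Submodule 𝕜 U)
    (hX : X = (Submodule.span 𝕜 (Set.range x)).topologicalClosure)
    (hY : Y = (Submodule.span 𝕜 (Set.range y)).topologicalClosure)
    (P Q : U →L[𝕜] U)
    (hPproj : ∀ u, P (P u) = P u) (hQproj : ∀ u, Q (Q u) = Q u)
    (hPrange : LinearMap.range (P : U →ₗ[𝕜] U) = X) (hQrange : LinearMap.range (Q : U →ₗ[𝕜] U) = Y)
    (T : X ≃L[𝕜] Y)
    (hT : ∀ n, ∀ h : x n ∈ X, ((T ⟨x n, h⟩ : Y) : U) = y n)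
    (hquot : Nonempty ((U ⧸ X) ≃L[𝕜] (U ⧸ Y))) :
    ∃ J : U ≃L[𝕜] U,
      (∀ v : X, J (v : U) = ((T v : Y) : U)) ∧
      (∀ u : U, ∀ h : P u ∈ X, ((T ⟨P u, h⟩ : Y) : U) = Q (J u)) ∧
      (∀ n, J (x n) = y n) := by
  obtain ⟨Φ⟩ := hquot
  haveI hXc : IsClosed (X : Set U) := hX ▸ (Submodule.span 𝕜 (Set.range x)).isClosed_topologicalClosure
  haveI hYc : IsClosed (Y : Set U) := hY ▸ (Submodule.span 𝕜 (Set.range y)).isClosed_topologicalClosure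
  -- basic facts about the projections
  have hPX : ∀ u, P u ∈ X := fun u => hPrange ▸ LinearMap.mem_range_self P.toLinearMap u
  have hQY : ∀ u, Q u ∈ Y := fun u => hQrange ▸ LinearMap.mem_range_self Q.toLinearMap u
  have hPid : ∀ v ∈ X, P v = v := by
    intro v hv
    rw [← hPrange] at hv
    obtain ⟨w, rfl⟩ := hv
    exact hPproj w
  have hQid : ∀ v ∈ Y, Q v = v := by
    intro v hv
    rw [← hQrange] at hv
    obtain ⟨w, rfl⟩ := hv
    exact hQproj w
  -- kernels are closed complete submodules
  haveI : CompleteSpace (LinearMap.ker (P : U →ₗ[𝕜] U)) := (ContinuousLinearMap.isClosed_ker P).completeSpace_coe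
  haveI : CompleteSpace (LinearMap.ker (Q : U →ₗ[𝕜] U)) := (ContinuousLinearMap.isClosed_ker Q).completeSpace_coe
  -- the quotient map restricted to the kernel is a continuous linear equivalence
  have kerEquiv : ∀ (R : U →L[𝕜] U) (Z : Submodule 𝕜 U), IsClosed (Z : Set U) →
      (∀ u, R u ∈ Z) → (∀ v ∈ Z, R v = v) →
      ∃ e : (LinearMap.ker (R : U →ₗ[𝕜] U)) ≃L[𝕜] (U ⧸ Z), ∀ w : LinearMap.ker (R : U →ₗ[𝕜] U), e w = Z.mkQ w := by
    intro R Z hZc hRZ hRid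
    haveI : CompleteSpace (LinearMap.ker (R : U →ₗ[𝕜] U)) := (ContinuousLinearMap.isClosed_ker R).completeSpace_coe
    haveI : IsClosed (Z : Set U) := hZc
    set f : (LinearMap.ker (R : U →ₗ[𝕜] U)) →L[𝕜] (U ⧸ Z) :=
      (Z.mkQ.comp (LinearMap.ker (R : U →ₗ[𝕜] U)).subtype).mkContinuous 1
        (fun w => by simpa using Submodule.Quotient.norm_mk_le Z (w : U)) with hf
    have hfapply : ∀ w : LinearMap.ker (R : U →ₗ[𝕜] U), f w = Z.mkQ (w : U) := fun w => rfl
    have hinj : LinearMap.ker (f : LinearMap.ker (R : U →ₗ[𝕜] U) →ₗ[𝕜] U ⧸ Z) = ⊥ := by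
      rw [LinearMap.ker_eq_bot']
      intro m hm
      have h0 : Z.mkQ (m : U) = 0 := by rw [← hfapply]; exact hm
      have hmZ : (m : U) ∈ Z := (Submodule.Quotient.mk_eq_zero Z).mp h0
      have : (m : U) = 0 := by
        have := hRid (m : U) hmZ
        have hk : R (m : U) = 0 := m.2
        rw [hk] at this; exact this.symm
      exact Subtype.ext this
    have hsurj : LinearMap.range (f : LinearMap.ker (R : U →ₗ[𝕜] U) →ₗ[𝕜] U ⧸ Z) = ⊤ := by
      rw [LinearMap.range_eq_top]
      intro q
      obtain ⟨u, rfl⟩ := Submodule.mkQ_surjective Z q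
      refine ⟨⟨u - R u, ?_⟩, ?_⟩
      · simp [LinearMap.mem_ker, map_sub, hRid _ (hRZ u)]
      · rw [ContinuousLinearMap.coe_coe, hfapply]
        show Z.mkQ (u - R u) = Z.mkQ u
        rw [map_sub, sub_eq_self, Submodule.mkQ_apply, Submodule.Quotient.mk_eq_zero]
        exact hRZ u
    exact ⟨ContinuousLinearEquiv.ofBijective f hinj hsurj, fun w => hfapply w⟩
  obtain ⟨eP, heP⟩ := kerEquiv P X hXc hPX hPid
  obtain ⟨eQ, heQ⟩ := kerEquiv Q Y hYc hQY hQid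
  -- the isomorphism between the kernels
  set S : (LinearMap.ker (P : U →ₗ[𝕜] U)) ≃L[𝕜] (LinearMap.ker (Q : U →ₗ[𝕜] U)) := (eP.trans Φ).trans eQ.symm with hS
  -- corestrictions
  set Pc : U →L[𝕜] X := P.codRestrict X hPX with hPc
  set Qc : U →L[𝕜] Y := Q.codRestrict Y hQY with hQc
  set Kp : U →L[𝕜] (LinearMap.ker (P : U →ₗ[𝕜] U)) :=
    (ContinuousLinearMap.id 𝕜 U - P).codRestrict (LinearMap.ker (P : U →ₗ[𝕜] U))
      (fun u => by simp [LinearMap.mem_ker, map_sub, hPproj u]) with hKp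
  set Kq : U →L[𝕜] (LinearMap.ker (Q : U →ₗ[𝕜] U)) :=
    (ContinuousLinearMap.id 𝕜 U - Q).codRestrict (LinearMap.ker (Q : U →ₗ[𝕜] U))
      (fun u => by simp [LinearMap.mem_ker, map_sub, hQproj u]) with hKq
  -- the candidate automorphism and its inverse
  set J₁ : U →L[𝕜] U :=
    Y.subtypeL.comp ((T : X →L[𝕜] Y).comp Pc) +
      (LinearMap.ker (Q : U →ₗ[𝕜] U)).subtypeL.comp ((S : (LinearMap.ker (P : U →ₗ[𝕜] U)) →L[𝕜] (LinearMap.ker (Q : U →ₗ[𝕜] U))).comp Kp)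
      with hJ₁
  set J₂ : U →L[𝕜] U :=
    X.subtypeL.comp ((T.symm : Y →L[𝕜] X).comp Qc) +
      (LinearMap.ker (P : U →ₗ[𝕜] U)).subtypeL.comp
        ((S.symm : (LinearMap.ker (Q : U →ₗ[𝕜] U)) →L[𝕜] (LinearMap.ker (P : U →ₗ[𝕜] U))).comp Kq)
      with hJ₂
  have hJ₁apply : ∀ u, J₁ u = ((T (Pc u) : Y) : U) + ((S (Kp u) : LinearMap.ker (Q : U →ₗ[𝕜] U)) : U) :=
    fun u => rfl
  have hJ₂apply : ∀ v, J₂ v = ((T.symm (Qc v) : X) : U) + ((S.symm (Kq v) : LinearMap.ker (P : U →ₗ[𝕜] U)) : U) :=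
    fun v => rfl
  -- `Q (J₁ u) = T (P u)`
  have hQJ₁ : ∀ u, Q (J₁ u) = ((T (Pc u) : Y) : U) := by
    intro u
    rw [hJ₁apply, map_add, hQid _ (T (Pc u)).2]
    have : Q ((S (Kp u) : LinearMap.ker (Q : U →ₗ[𝕜] U)) : U) = 0 := (S (Kp u)).2
    rw [this, add_zero]
  have hleft : ∀ u, J₂ (J₁ u) = u := by
    intro u
    rw [hJ₂apply]
    have h1 : Qc (J₁ u) = T (Pc u) := Subtype.ext (hQJ₁ u)
    have h2 : Kq (J₁ u) = S (Kp u) := by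
      apply Subtype.ext
      show J₁ u - Q (J₁ u) = _
      rw [hQJ₁ u, hJ₁apply]; abel
    rw [h1, h2, T.symm_apply_apply, S.symm_apply_apply]
    show (P u) + (u - P u) = u
    abel
  have hright : ∀ v, J₁ (J₂ v) = v := by
    intro v
    rw [hJ₁apply]
    have hPJ₂ : P (J₂ v) = ((T.symm (Qc v) : X) : U) := by
      rw [hJ₂apply, map_add, hPid _ (T.symm (Qc v)).2]
      have : P ((S.symm (Kq v) : LinearMap.ker (P : U →ₗ[𝕜] U)) : U) = 0 := (S.symm (Kq v)).2
      rw [this, add_zero]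
    have h1 : Pc (J₂ v) = T.symm (Qc v) := Subtype.ext hPJ₂
    have h2 : Kp (J₂ v) = S.symm (Kq v) := by
      apply Subtype.ext
      show J₂ v - P (J₂ v) = _
      rw [hPJ₂, hJ₂apply]; abel
    rw [h1, h2, T.apply_symm_apply, S.apply_symm_apply]
    show (Q v) + (v - Q v) = v
    abel
  set J : U ≃L[𝕜] U :=
    { toLinearMap := J₁.toLinearMap
      invFun := J₂
      left_inv := hleft
      right_inv := hright
      continuous_toFun := J₁.continuous
      continuous_invFun := J₂.continuous } with hJ
  have hJapply : ∀ u, J u = J₁ u := fun u => rfl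
  have hext : ∀ v : X, J (v : U) = ((T v : Y) : U) := by
    intro v
    rw [hJapply, hJ₁apply]
    have hPv : P (v : U) = v := hPid _ v.2
    have h1 : Pc (v : U) = v := Subtype.ext hPv
    have h2 : Kp (v : U) = 0 := by
      apply Subtype.ext
      show (v : U) - P (v : U) = 0
      rw [hPv, sub_self]
    rw [h1, h2, map_zero]
    simp
  refine ⟨J, hext, ?_, ?_⟩
  · intro u h
    have : (⟨P u, h⟩ : X) = Pc u := rfl
    rw [this, ← hQJ₁ u, hJapply]
  · intro n
    have hx : x n ∈ X := by
      rw [hX]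
      exact Submodule.le_topologicalClosure _ (Submodule.subset_span (Set.mem_range_self n))
    rw [hext ⟨x n, hx⟩, hT n hx]
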